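/- There exists a type Q having exactly 4 elements, together with a binary operation ▷ on Q satisfying Q1: x ▷ x = x and Q2': (x ▷ y) ▷ y = x (but not required to satisfy the self-distributivity identity), and elements a1, …, a10 ∈ Q satisfying the culprit relations a1 = a9 ▷ a7, a3 = a1 ▷ a2, a2 = a3 ▷ a4, a5 = a2 ▷ a10, a6 = a5 ▷ a4, a7 = a6 ▷ a1, a8 = a7 ▷ a4, a10 = a8 ▷ a9, a4 = a10 ▷ a3, a9 = a4 ▷ a8, such that not all of a1, …, a10 are equal. This shows the culprit diagram cannot be untangled using only Reidemeister moves of types I and II. -/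
import Mathlib

def culpritOp : Fin 4 → Fin 4 → Fin 4
  | x, 0 => x
  | x, 1 => ![2,1,0,3] x
  | x, 2 => ![0,3,2,1] x
  | x, 3 => ![0,2,1,3] x

theorem culprit_needs_RM3 :
    ∃ (Q : Type) (op : Q → Q → Q), Nat.card Q = 4 ∧
      (∀ x : Q, op x x = x) ∧
      (∀ x y : Q, op (op x y) y = x) ∧
      ∃ a1 a2 a3 a4 a5 a6 a7 a8 a9 a10 : Q,
        a1 = op a9 a7 ∧ a3 = op a1 a2 ∧ a2 = op a3 a4 ∧ a5 = op a2 a10 ∧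
        a6 = op a5 a4 ∧ a7 = op a6 a1 ∧ a8 = op a7 a4 ∧ a10 = op a8 a9 ∧
        a4 = op a10 a3 ∧ a9 = op a4 a8 ∧
        ¬(a1 = a2 ∧ a2 = a3 ∧ a3 = a4 ∧ a4 = a5 ∧ a5 = a6 ∧ a6 = a7 ∧
          a7 = a8 ∧ a8 = a9 ∧ a9 = a10) := by
  refine ⟨Fin 4, culpritOp, by simp, by decide, by decide,
    3, 3, 3, 1, 1, 1, 2, 0, 1, 2, ?_⟩
  decide
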